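/- (One-step decrease, regime p4.) Let f1 ∈ F_{μ1,L1} and f2 ∈ F_{μ2,L2} with μ2 > −μ1 > 0, L2 > μ1, L1 > μ2, and (1/L2)·(2 + L1/μ1) ≤ 1/μ1 + 1/μ2 + 1/L1 ≤ 0. Let F := f1 − f2 and consider a DCA step from x to x⁺ with g2 ∈ ∂f2(x), g1⁺ ∈ ∂f1(x⁺), g1⁺ = g2, and let g1 ∈ ∂f1(x), g2⁺ ∈ ∂f2(x⁺). Then F(x) − F(x⁺) ≥ σ·(1/2)‖g1 − g2‖² + σ⁺·(1/2)‖g1⁺ − g2⁺‖², where σ = 1/(L1 + μ1) and σ⁺ = (1/L2)·(1/μ1 + 1/μ2 + 1/L1) / (1/μ1 + 1/μ2 + 1/L1 − 1/L2). -/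

import Mathlib

open RealInnerProductSpace

variable {H : Type*} [NormedAddCommGroup H] [InnerProductSpace ℝ H]

/-- `f` has lower curvature `μ`, i.e. `f - (μ/2)‖·‖²` is convex. -/
def HasLowerCurvature (μ : ℝ) (f : H → ℝ) : Prop :=
  ConvexOn ℝ Set.univ fun x => f x - μ / 2 * ‖x‖ ^ 2

/-- `f` has upper curvature `L`, i.e. `(L/2)‖·‖² - f` is convex. -/
def HasUpperCurvature (L : ℝ) (f : H → ℝ) : Prop :=
  ConvexOn ℝ Set.univ fun x => L / 2 * ‖x‖ ^ 2 - f x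

/-- `g` is a subgradient of `f` (of lower curvature `μ`) at `x`. -/
def IsSubgradient (μ : ℝ) (f : H → ℝ) (x g : H) : Prop :=
  ∀ y, f y ≥ f x + ⟪g, y - x⟫ + μ / 2 * ‖y - x‖ ^ 2


lemma norm_sub_smul_sq (c : ℝ) (u s : H) :
    ‖u - c • s‖ ^ 2 = ‖u‖ ^ 2 - 2 * c * ⟪u, s⟫ + c ^ 2 * ‖s‖ ^ 2 := by
  rw [norm_sub_sq_real, real_inner_smul_right, norm_smul, Real.norm_eq_abs, mul_pow, sq_abs]
  ring

lemma norm_smul_sub_smul_sq (c d : ℝ) (u s : H) :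
    ‖c • u - d • s‖ ^ 2 = c ^ 2 * ‖u‖ ^ 2 - 2 * (c * d) * ⟪u, s⟫ + d ^ 2 * ‖s‖ ^ 2 := by
  rw [norm_sub_sq_real, real_inner_smul_right, real_inner_smul_left, norm_smul, norm_smul,
    Real.norm_eq_abs, Real.norm_eq_abs, mul_pow, mul_pow, sq_abs, sq_abs]
  ring

lemma descent_lemma (mu L : ℝ) (f : H → ℝ) (hup : HasUpperCurvature L f)
    (x g : H) (hx : IsSubgradient mu f x g) (z : H) :
    f z ≤ f x + ⟪g, z - x⟫ + L / 2 * ‖z - x‖ ^ 2 := by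
  have step : ∀ s : ℝ, 0 < s →
      f z ≤ f x + ⟪g, z - x⟫ + L / 2 * ‖z - x‖ ^ 2 + s * ((L - mu) / 2 * ‖z - x‖ ^ 2) := by
    intro s hs
    have hs1 : (0:ℝ) < 1 + s := by linarith
    set a : ℝ := 1 / (1 + s) with ha
    set b : ℝ := s / (1 + s) with hb
    have hab : a + b = 1 := by rw [ha, hb]; field_simp
    have ha0 : 0 ≤ a := by positivity
    have hb0 : 0 ≤ b := by positivity
    set w : H := x - s • (z - x) with hw
    have hpt : a • w + b • z = x := by
      have h1 : a • w + b • z = (a + a * s) • x + (b - a * s) • z := by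
        rw [hw]; module
      have h2 : a + a * s = 1 := by rw [ha]; field_simp
      have h3 : b - a * s = 0 := by rw [ha, hb]; field_simp; ring
      rw [h1, h2, h3]; simp
    have hcvx := hup.2 (Set.mem_univ w) (Set.mem_univ z) ha0 hb0 hab
    simp only [smul_eq_mul] at hcvx
    rw [hpt] at hcvx
    -- hcvx : L/2*‖x‖^2 - f x ≤ a*(L/2*‖w‖^2 - f w) + b*(L/2*‖z‖^2 - f z)
    have hfw := hx w
    have hwx : w - x = -(s • (z - x)) := by rw [hw]; abel
    rw [hwx, inner_neg_right, real_inner_smul_right, norm_neg, norm_smul, Real.norm_eq_abs] at hfw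
    have haa : (1 + s) * a = 1 := by rw [ha]; field_simp
    have hbb : (1 + s) * b = s := by rw [hb]; field_simp
    have hmul := mul_le_mul_of_nonneg_left hcvx (le_of_lt hs1)
    have hmul2 : (1 + s) * (L / 2 * ‖x‖ ^ 2 - f x) ≤
        (L / 2 * ‖w‖ ^ 2 - f w) + s * (L / 2 * ‖z‖ ^ 2 - f z) := by
      calc (1 + s) * (L / 2 * ‖x‖ ^ 2 - f x)
          ≤ (1 + s) * (a * (L / 2 * ‖w‖ ^ 2 - f w) + b * (L / 2 * ‖z‖ ^ 2 - f z)) := hmul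
        _ = ((1 + s) * a) * (L / 2 * ‖w‖ ^ 2 - f w) + ((1 + s) * b) * (L / 2 * ‖z‖ ^ 2 - f z) := by
            ring
        _ = (L / 2 * ‖w‖ ^ 2 - f w) + s * (L / 2 * ‖z‖ ^ 2 - f z) := by rw [haa, hbb]; ring
    have e3 : ‖w‖ ^ 2 = ‖x‖ ^ 2 - 2 * s * ⟪x, z - x⟫ + s ^ 2 * ‖z - x‖ ^ 2 := by
      rw [hw, norm_sub_smul_sq]
    have e4 : ‖z - x‖ ^ 2 = ‖z‖ ^ 2 - 2 * ⟪x, z⟫ + ‖x‖ ^ 2 := by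
      rw [norm_sub_sq_real, real_inner_comm]
    have e5 : ⟪x, z - x⟫ = ⟪x, z⟫ - ‖x‖ ^ 2 := by
      rw [inner_sub_right, real_inner_self_eq_norm_sq]
    have key : s * (f x + ⟪g, z - x⟫ + L / 2 * ‖z - x‖ ^ 2 + s * ((L - mu) / 2 * ‖z - x‖ ^ 2) - f z)
        = ((L / 2 * ‖w‖ ^ 2 - f w) + s * (L / 2 * ‖z‖ ^ 2 - f z)
            - (1 + s) * (L / 2 * ‖x‖ ^ 2 - f x))
          + (f w - (f x + -(s * ⟪g, z - x⟫) + mu / 2 * (|s| * ‖z - x‖) ^ 2)) := by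
      rw [mul_pow, sq_abs, e3, e5, e4]
      ring
    have hsum : 0 ≤ s * (f x + ⟪g, z - x⟫ + L / 2 * ‖z - x‖ ^ 2
        + s * ((L - mu) / 2 * ‖z - x‖ ^ 2) - f z) := by
      rw [key]; linarith [hmul2, hfw]
    nlinarith [hsum, hs]
  refine le_of_forall_pos_le_add ?_
  intro ε hε
  rcases le_or_gt ((L - mu) / 2 * ‖z - x‖ ^ 2) 0 with hc | hc
  · have h1 := step 1 one_pos
    linarith
  · have h1 := step (ε / ((L - mu) / 2 * ‖z - x‖ ^ 2)) (by positivity)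
    rw [div_mul_cancel₀ ε (ne_of_gt hc)] at h1
    linarith
lemma interp' (mu L : ℝ) (hmuL : mu ≤ L) (f : H → ℝ)
    (hup : HasUpperCurvature L f)
    (x y gx gy : H) (hx : IsSubgradient mu f x gx) (hy : IsSubgradient mu f y gy) :
    (L - mu) * (f x - f y - ⟪gy, x - y⟫ - mu / 2 * ‖x - y‖ ^ 2) ≥
      1 / 2 * ‖(gx - gy) - mu • (x - y)‖ ^ 2 := by
  set w : H := (gx - gy) - mu • (x - y) with hwdef
  have hw1 : ⟪gx, w⟫ - ⟪gy, w⟫ - mu * ⟪x - y, w⟫ = ‖w‖ ^ 2 := by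
    have h' : ⟪gx, w⟫ - ⟪gy, w⟫ - mu * ⟪x - y, w⟫ = ⟪(gx - gy) - mu • (x - y), w⟫ := by
      simp only [inner_sub_left, real_inner_smul_left]
    rw [h', ← hwdef, real_inner_self_eq_norm_sq]
  -- generic consequence of descent + subgradient at a point x - t • w
  have hgen : ∀ t : ℝ,
      f y + (⟪gy, x - y⟫ - t * ⟪gy, w⟫)
          + mu / 2 * (‖x - y‖ ^ 2 - 2 * t * ⟪x - y, w⟫ + t ^ 2 * ‖w‖ ^ 2)
        ≤ f x + -(t * ⟪gx, w⟫) + L / 2 * (t ^ 2 * ‖w‖ ^ 2) := by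
    intro t
    have hd := descent_lemma mu L f hup x gx hx (x - t • w)
    have hl := hy (x - t • w)
    have ez1 : x - t • w - x = -(t • w) := by abel
    have ez2 : x - t • w - y = (x - y) - t • w := by abel
    rw [ez1, inner_neg_right, real_inner_smul_right, norm_neg, norm_smul, Real.norm_eq_abs,
      mul_pow, sq_abs] at hd
    rw [ez2, inner_sub_right, real_inner_smul_right, norm_sub_smul_sq] at hl
    linarith [hd, hl]
  rcases eq_or_lt_of_le hmuL with heq | hlt
  · -- mu = L
    subst heq
    have hC : ∀ t : ℝ, 0 < t →
        t * ‖w‖ ^ 2 ≤ f x - f y - ⟪gy, x - y⟫ - mu / 2 * ‖x - y‖ ^ 2 := by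
      intro t ht
      have h := hgen t
      have hw1t : t * ⟪gx, w⟫ - t * ⟪gy, w⟫ - t * (mu * ⟪x - y, w⟫) = t * ‖w‖ ^ 2 := by
        linear_combination t * hw1
      nlinarith [h, hw1t]
    have hW : ‖w‖ ^ 2 ≤ 0 := by
      by_contra hcon
      push_neg at hcon
      have h1 := hC 1 one_pos
      set Cst := f x - f y - ⟪gy, x - y⟫ - mu / 2 * ‖x - y‖ ^ 2 with hCst
      have hCpos : 0 < Cst := by nlinarith [h1, hcon]
      have h2 := hC ((Cst + 1) / ‖w‖ ^ 2) (by positivity)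
      rw [div_mul_cancel₀ (Cst + 1) (ne_of_gt hcon)] at h2
      linarith
    nlinarith [hW, sq_nonneg ‖w‖]
  · -- mu < L
    have hLm : 0 < L - mu := by linarith
    set c : ℝ := 1 / (L - mu) with hc
    have hc2 : (L - mu) * c = 1 := by rw [hc]; field_simp
    have h := hgen c
    have hw1c : c * ⟪gx, w⟫ - c * ⟪gy, w⟫ - c * (mu * ⟪x - y, w⟫) = c * ‖w‖ ^ 2 := by
      linear_combination c * hw1
    have hstep : 0 ≤ (f x - f y - ⟪gy, x - y⟫ - mu / 2 * ‖x - y‖ ^ 2)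
        - c * ‖w‖ ^ 2 + c ^ 2 * (L - mu) / 2 * ‖w‖ ^ 2 := by
      nlinarith [h, hw1c]
    have hstep3 : 0 ≤ (L - mu) * ((f x - f y - ⟪gy, x - y⟫ - mu / 2 * ‖x - y‖ ^ 2)
        - c * ‖w‖ ^ 2 + c ^ 2 * (L - mu) / 2 * ‖w‖ ^ 2) := mul_nonneg (le_of_lt hLm) hstep
    have e_a : (L - mu) * (c * ‖w‖ ^ 2) = ‖w‖ ^ 2 := by
      linear_combination ‖w‖ ^ 2 * hc2
    have e_b : (L - mu) ^ 2 * c ^ 2 * ‖w‖ ^ 2 = ‖w‖ ^ 2 := by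
      linear_combination ((L - mu) * c + 1) * ‖w‖ ^ 2 * hc2
    nlinarith [hstep3, e_a, e_b]


set_option maxHeartbeats 1600000 in
/-- one-step decrease, regime p4. -/
theorem dca_one_step_p4
    (mu1 mu2 L1 L2 : ℝ)
    (h1 : -mu1 < mu2) (h2 : 0 < -mu1) (h3 : mu1 < L2) (h4 : mu2 < L1)
    (h5 : (1 / L2) * (2 + L1 / mu1) ≤ 1 / mu1 + 1 / mu2 + 1 / L1)
    (h6 : 1 / mu1 + 1 / mu2 + 1 / L1 ≤ 0)
    (f1 f2 : H → ℝ)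
    (h1lo : HasLowerCurvature mu1 f1) (h1up : HasUpperCurvature L1 f1)
    (h2lo : HasLowerCurvature mu2 f2) (h2up : HasUpperCurvature L2 f2)
    (x xp g1 g2 g2p : H)
    (hg2 : IsSubgradient mu2 f2 x g2) (hg1p : IsSubgradient mu1 f1 xp g2)
    (hg1 : IsSubgradient mu1 f1 x g1) (hg2p : IsSubgradient mu2 f2 xp g2p) :
    (f1 x - f2 x) - (f1 xp - f2 xp) ≥
      1 / (L1 + mu1) * ((1 : ℝ) / 2) * ‖g1 - g2‖ ^ 2 +
      (1 / L2) * (1 / mu1 + 1 / mu2 + 1 / L1) / (1 / mu1 + 1 / mu2 + 1 / L1 - 1 / L2) *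
        ((1 : ℝ) / 2) * ‖g2 - g2p‖ ^ 2 := by
  have hmu1neg : mu1 < 0 := by linarith
  have hmu2pos : 0 < mu2 := by linarith
  have hL1pos : 0 < L1 := by linarith
  have hL1mu1 : 0 < L1 + mu1 := by linarith
  have hd1 : 0 < L1 - mu1 := by linarith
  rcases lt_or_ge L2 mu2 with hdeg | hd2
  · -- degenerate case: the space must be trivial
    have hzero : ∀ y : H, y = 0 := by
      intro y
      have hsum := h2lo.add h2up
      have hcvx := hsum.2 (Set.mem_univ y) (Set.mem_univ (-y))
        (by norm_num : (0:ℝ) ≤ 1 / 2) (by norm_num : (0:ℝ) ≤ 1 / 2) (by norm_num)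
      have hpt : (1 / 2 : ℝ) • y + (1 / 2 : ℝ) • (-y) = (0 : H) := by module
      rw [hpt] at hcvx
      simp only [Pi.add_apply, smul_eq_mul, norm_zero, norm_neg] at hcvx
      have hy2 : ‖y‖ ^ 2 ≤ 0 := by nlinarith [hcvx]
      have hyle : ‖y‖ ≤ 0 := by nlinarith [norm_nonneg y, hy2]
      exact norm_eq_zero.mp (le_antisymm hyle (norm_nonneg y))
    rw [hzero x, hzero xp, hzero g1, hzero g2, hzero g2p]
    simp
  · -- main case
    have hL2pos : 0 < L2 := lt_of_lt_of_le hmu2pos hd2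
    have hmu1ne : mu1 ≠ 0 := ne_of_lt hmu1neg
    have hmu2ne : mu2 ≠ 0 := ne_of_gt hmu2pos
    have hL1ne : L1 ≠ 0 := ne_of_gt hL1pos
    have hL2ne : L2 ≠ 0 := ne_of_gt hL2pos
    have hneg : mu1 * mu2 * L1 < 0 := by
      have h := mul_pos hmu2pos hL1pos
      nlinarith
    have hprod : (1 / mu1 + 1 / mu2 + 1 / L1) * (mu1 * mu2 * L1) = (mu1 * L1 + mu2 * L1 + mu1 * mu2) := by
      field_simp
      ring
    have hN0 : 0 ≤ (mu1 * L1 + mu2 * L1 + mu1 * mu2) := by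
      have hsp := mul_nonneg (neg_nonneg.mpr h6) (neg_nonneg.mpr (le_of_lt hneg))
      nlinarith [hsp, hprod]
    have hM : 0 < (L2 * (mu1 * L1 + mu2 * L1 + mu1 * mu2) - mu1 * mu2 * L1) := by nlinarith [mul_nonneg (le_of_lt hL2pos) hN0, hneg]
    have hMne : (L2 * (mu1 * L1 + mu2 * L1 + mu1 * mu2) - mu1 * mu2 * L1) ≠ 0 := ne_of_gt hM
    have hdenne : (1 / mu1 + 1 / mu2 + 1 / L1 - 1 / L2) ≠ 0 := by
      have hrw : (1 / mu1 + 1 / mu2 + 1 / L1 - 1 / L2) = (L2 * (mu1 * L1 + mu2 * L1 + mu1 * mu2) - mu1 * mu2 * L1) / (mu1 * mu2 * L1 * L2) := by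
        field_simp
        ring
      rw [hrw]
      exact div_ne_zero hMne (by positivity)
    have hsigma : (1 / L2) * (1 / mu1 + 1 / mu2 + 1 / L1) / (1 / mu1 + 1 / mu2 + 1 / L1 - 1 / L2)
        = (mu1 * L1 + mu2 * L1 + mu1 * mu2) / (L2 * (mu1 * L1 + mu2 * L1 + mu1 * mu2) - mu1 * mu2 * L1) := by
      rw [div_eq_div_iff hdenne hMne]
      field_simp
      ring
    rw [hsigma]
    have E1 := interp' mu1 L1 (by linarith) f1 h1up x xp g1 g2 hg1 hg1p
    have E2 := interp' mu1 L1 (by linarith) f1 h1up xp x g2 g1 hg1p hg1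
    have E4 := interp' mu2 L2 hd2 f2 h2up xp x g2p g2 hg2p hg2
    have hv1 : (g2 - g1) - mu1 • (xp - x) = -((g1 - g2) - mu1 • (x - xp)) := by module
    have hv2 : (g2p - g2) - mu2 • (xp - x) = -((g2 - g2p) - mu2 • (x - xp)) := by module
    have hnrev : ‖xp - x‖ = ‖x - xp‖ := norm_sub_rev _ _
    have hip1 : ⟪g1, xp - x⟫ = -(⟪g1 - g2, x - xp⟫ + ⟪g2, x - xp⟫) := by
      rw [show xp - x = -(x - xp) by abel, inner_neg_right, inner_sub_left]
      ring
    have hip2 : ⟪g2, xp - x⟫ = -⟪g2, x - xp⟫ := by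
      rw [show xp - x = -(x - xp) by abel, inner_neg_right]
    rw [norm_sub_smul_sq] at E1
    rw [hv1, norm_neg, norm_sub_smul_sq, hip1, hnrev] at E2
    have hG1 : 0 ≤ ((L1 - mu1) * (f1 x - f1 xp - ⟪g2, x - xp⟫ - mu1 / 2 * ‖x - xp‖ ^ 2) - 1 / 2 * (‖g1 - g2‖ ^ 2 - 2 * mu1 * ⟪g1 - g2, x - xp⟫ + mu1 ^ 2 * ‖x - xp‖ ^ 2)) := by linarith [E1]
    have hG2 : 0 ≤ ((L1 - mu1) * (f1 xp - f1 x + ⟪g1 - g2, x - xp⟫ + ⟪g2, x - xp⟫ - mu1 / 2 * ‖x - xp‖ ^ 2) - 1 / 2 * (‖g1 - g2‖ ^ 2 - 2 * mu1 * ⟪g1 - g2, x - xp⟫ + mu1 ^ 2 * ‖x - xp‖ ^ 2)) := by linarith [E2]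
    rcases eq_or_lt_of_le hd2 with heq | hlt
    · -- mu2 = L2
      subst heq
      rw [hv2, norm_neg] at E4
      have h0 : (mu2 - mu2) * (f2 xp - f2 x - ⟪g2, xp - x⟫ - mu2 / 2 * ‖xp - x‖ ^ 2) = 0 := by
        ring
      rw [h0] at E4
      have hveq : (g2 - g2p) - mu2 • (x - xp) = 0 := by
        have hn1 : ‖(g2 - g2p) - mu2 • (x - xp)‖ ^ 2 ≤ 0 := by linarith [E4]
        have hn2 : ‖(g2 - g2p) - mu2 • (x - xp)‖ ≤ 0 := by
          nlinarith [norm_nonneg ((g2 - g2p) - mu2 • (x - xp))]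
        exact norm_eq_zero.mp (le_antisymm hn2 (norm_nonneg _))
      have hv : g2 - g2p = mu2 • (x - xp) := by rwa [sub_eq_zero] at hveq
      have hr : ‖g2 - g2p‖ ^ 2 = mu2 ^ 2 * ‖x - xp‖ ^ 2 := by
        rw [hv, norm_smul, Real.norm_eq_abs, mul_pow, sq_abs]
      rw [hr]
      have G4p := hg2 xp
      rw [hip2, hnrev] at G4p
      have hG4p : 0 ≤ (f2 xp - f2 x + ⟪g2, x - xp⟫ - mu2 / 2 * ‖x - xp‖ ^ 2) := by linarith [G4p]
      have hCpos : 0 < (2 * (L1 - mu1) * (L1 + mu1) * (mu2 * (mu1 * L1 + mu2 * L1 + mu1 * mu2) - mu1 * mu2 * L1)) :=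
        mul_pos (mul_pos (mul_pos two_pos hd1) hL1mu1) hM
      have e_q : (2 * (L1 - mu1) * (L1 + mu1) * (mu2 * (mu1 * L1 + mu2 * L1 + mu1 * mu2) - mu1 * mu2 * L1)) * (1 / (L1 + mu1)) = 2 * (L1 - mu1) * (mu2 * (mu1 * L1 + mu2 * L1 + mu1 * mu2) - mu1 * mu2 * L1) := by
        field_simp <;> ring
      have e_r : (2 * (L1 - mu1) * (L1 + mu1) * (mu2 * (mu1 * L1 + mu2 * L1 + mu1 * mu2) - mu1 * mu2 * L1)) * ((mu1 * L1 + mu2 * L1 + mu1 * mu2) / (mu2 * (mu1 * L1 + mu2 * L1 + mu1 * mu2) - mu1 * mu2 * L1)) = 2 * (L1 - mu1) * (L1 + mu1) * (mu1 * L1 + mu2 * L1 + mu1 * mu2) := by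
        rw [mul_div_assoc', div_eq_iff hMne]; ring
      have hX : 0 ≤ (2 * (L1 - mu1) * (L1 + mu1) * (mu2 * (mu1 * L1 + mu2 * L1 + mu1 * mu2) - mu1 * mu2 * L1)) * (f1 x - f2 x - (f1 xp - f2 xp) - (1 / (L1 + mu1) * ((1:ℝ) / 2) * ‖g1 - g2‖ ^ 2 + (mu1 * L1 + mu2 * L1 + mu1 * mu2) / (mu2 * (mu1 * L1 + mu2 * L1 + mu1 * mu2) - mu1 * mu2 * L1) * ((1:ℝ) / 2) * (mu2 ^ 2 * ‖x - xp‖ ^ 2))) := by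
        have hiden : (2 * (L1 - mu1) * (L1 + mu1) * (mu2 * (mu1 * L1 + mu2 * L1 + mu1 * mu2) - mu1 * mu2 * L1)) * (f1 x - f2 x - (f1 xp - f2 xp) - (1 / (L1 + mu1) * ((1:ℝ) / 2) * ‖g1 - g2‖ ^ 2 + (mu1 * L1 + mu2 * L1 + mu1 * mu2) / (mu2 * (mu1 * L1 + mu2 * L1 + mu1 * mu2) - mu1 * mu2 * L1) * ((1:ℝ) / 2) * (mu2 ^ 2 * ‖x - xp‖ ^ 2)))
            = (mu2 * (mu1 * L1 + mu2 * L1 + mu1 * mu2) - mu1 * mu2 * L1) * (2 * L1 * ((L1 - mu1) * (f1 x - f1 xp - ⟪g2, x - xp⟫ - mu1 / 2 * ‖x - xp‖ ^ 2) - 1 / 2 * (‖g1 - g2‖ ^ 2 - 2 * mu1 * ⟪g1 - g2, x - xp⟫ + mu1 ^ 2 * ‖x - xp‖ ^ 2)) + (-(2 * mu1)) * ((L1 - mu1) * (f1 xp - f1 x + ⟪g1 - g2, x - xp⟫ + ⟪g2, x - xp⟫ - mu1 / 2 * ‖x - xp‖ ^ 2) - 1 / 2 * (‖g1 - g2‖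 ^ 2 - 2 * mu1 * ⟪g1 - g2, x - xp⟫ + mu1 ^ 2 * ‖x - xp‖ ^ 2))
              + 2 * ((L1 - mu1) * (L1 + mu1)) * (f2 xp - f2 x + ⟪g2, x - xp⟫ - mu2 / 2 * ‖x - xp‖ ^ 2)) := by
          linear_combination (-(((1:ℝ) / 2) * ‖g1 - g2‖ ^ 2)) * e_q
            + (-(((1:ℝ) / 2) * (mu2 ^ 2 * ‖x - xp‖ ^ 2))) * e_r
        rw [hiden]
        have hcm1 : (0:ℝ) ≤ 2 * L1 := by linarith
        have hcm2 : (0:ℝ) ≤ -(2 * mu1) := by linarith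
        have hcm3 : (0:ℝ) ≤ 2 * ((L1 - mu1) * (L1 + mu1)) := by positivity
        exact mul_nonneg (le_of_lt hM)
          (add_nonneg (add_nonneg (mul_nonneg hcm1 hG1) (mul_nonneg hcm2 hG2))
            (mul_nonneg hcm3 hG4p))
      have hXX : (2 * (L1 - mu1) * (L1 + mu1) * (mu2 * (mu1 * L1 + mu2 * L1 + mu1 * mu2) - mu1 * mu2 * L1)) * 0 ≤ (2 * (L1 - mu1) * (L1 + mu1) * (mu2 * (mu1 * L1 + mu2 * L1 + mu1 * mu2) - mu1 * mu2 * L1)) * (f1 x - f2 x - (f1 xp - f2 xp) - (1 / (L1 + mu1) * ((1:ℝ) / 2) * ‖g1 - g2‖ ^ 2 + (mu1 * L1 + mu2 * L1 + mu1 * mu2) / (mu2 * (mu1 * L1 + mu2 * L1 + mu1 * mu2) - mu1 * mu2 * L1) * ((1:ℝ) / 2) * (mu2 ^ 2 * ‖x - xp‖ ^ 2))) := by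
        rw [mul_zero]
        exact hX
      have hfin := le_of_mul_le_mul_left hXX hCpos
      rw [ge_iff_le, ← sub_nonneg]
      linarith [hfin]
    · -- mu2 < L2
      have hd2' : 0 < L2 - mu2 := by linarith
      rw [hv2, norm_neg, norm_sub_smul_sq, hip2, hnrev] at E4
      have hG4 : 0 ≤ ((L2 - mu2) * (f2 xp - f2 x + ⟪g2, x - xp⟫ - mu2 / 2 * ‖x - xp‖ ^ 2) - 1 / 2 * (‖g2 - g2p‖ ^ 2 - 2 * mu2 * ⟪g2 - g2p, x - xp⟫ + mu2 ^ 2 * ‖x - xp‖ ^ 2)) := by linarith [E4]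
      have hHH : 0 ≤ ‖(mu2 * (L1 + mu1)) • (g2 - g2p) - (L2 * (mu1 * L1 + mu2 * L1 + mu1 * mu2) - mu1 * mu2 * L1) • (x - xp)‖ ^ 2 := by positivity
      rw [norm_smul_sub_smul_sq] at hHH
      have hCpos : 0 < (2 * (L1 - mu1) * (L2 - mu2) * (L2 * (mu1 * L1 + mu2 * L1 + mu1 * mu2) - mu1 * mu2 * L1) * (L1 + mu1)) :=
        mul_pos (mul_pos (mul_pos (mul_pos two_pos hd1) hd2') hM) hL1mu1
      have e_q : (2 * (L1 - mu1) * (L2 - mu2) * (L2 * (mu1 * L1 + mu2 * L1 + mu1 * mu2) - mu1 * mu2 * L1) * (L1 + mu1)) * (1 / (L1 + mu1)) = 2 * (L1 - mu1) * (L2 - mu2) * (L2 * (mu1 * L1 + mu2 * L1 + mu1 * mu2) - mu1 * mu2 * L1) := by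
        field_simp <;> ring
      have e_r : (2 * (L1 - mu1) * (L2 - mu2) * (L2 * (mu1 * L1 + mu2 * L1 + mu1 * mu2) - mu1 * mu2 * L1) * (L1 + mu1)) * ((mu1 * L1 + mu2 * L1 + mu1 * mu2) / (L2 * (mu1 * L1 + mu2 * L1 + mu1 * mu2) - mu1 * mu2 * L1)) = 2 * (L1 - mu1) * (L2 - mu2) * (L1 + mu1) * (mu1 * L1 + mu2 * L1 + mu1 * mu2) := by
        rw [mul_div_assoc', div_eq_iff hMne]; ring
      have hX : 0 ≤ (2 * (L1 - mu1) * (L2 - mu2) * (L2 * (mu1 * L1 + mu2 * L1 + mu1 * mu2) - mu1 * mu2 * L1) * (L1 + mu1)) * (f1 x - f2 x - (f1 xp - f2 xp) - (1 / (L1 + mu1) * ((1:ℝ) / 2) * ‖g1 - g2‖ ^ 2 + (mu1 * L1 + mu2 * L1 + mu1 * mu2) / (L2 * (mu1 * L1 + mu2 * L1 + mu1 * mu2) - mu1 * mu2 * L1) * ((1:ℝ) / 2) * ‖g2 - g2p‖ ^ 2)) := by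
        have hiden : (2 * (L1 - mu1) * (L2 - mu2) * (L2 * (mu1 * L1 + mu2 * L1 + mu1 * mu2) - mu1 * mu2 * L1) * (L1 + mu1)) * (f1 x - f2 x - (f1 xp - f2 xp) - (1 / (L1 + mu1) * ((1:ℝ) / 2) * ‖g1 - g2‖ ^ 2 + (mu1 * L1 + mu2 * L1 + mu1 * mu2) / (L2 * (mu1 * L1 + mu2 * L1 + mu1 * mu2) - mu1 * mu2 * L1) * ((1:ℝ) / 2) * ‖g2 - g2p‖ ^ 2))
            = 2 * (L2 - mu2) * (L2 * (mu1 * L1 + mu2 * L1 + mu1 * mu2) - mu1 * mu2 * L1) * L1 * ((L1 - mu1) * (f1 x - f1 xp - ⟪g2, x - xp⟫ - mu1 / 2 * ‖x - xp‖ ^ 2) - 1 / 2 * (‖g1 - g2‖ ^ 2 - 2 * mu1 * ⟪g1 - g2, x - xp⟫ + mu1 ^ 2 * ‖x - xp‖ ^ 2))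
              + 2 * (L2 - mu2) * (L2 * (mu1 * L1 + mu2 * L1 + mu1 * mu2) - mu1 * mu2 * L1) * (-mu1) * ((L1 - mu1) * (f1 xp - f1 x + ⟪g1 - g2, x - xp⟫ + ⟪g2, x - xp⟫ - mu1 / 2 * ‖x - xp‖ ^ 2) - 1 / 2 * (‖g1 - g2‖ ^ 2 - 2 * mu1 * ⟪g1 - g2, x - xp⟫ + mu1 ^ 2 * ‖x - xp‖ ^ 2))
              + 2 * (L1 - mu1) * (L2 * (mu1 * L1 + mu2 * L1 + mu1 * mu2) - mu1 * mu2 * L1) * (L1 + mu1) * ((L2 - mu2) * (f2 xp - f2 x + ⟪g2, x - xp⟫ - mu2 / 2 * ‖x - xp‖ ^ 2) - 1 / 2 * (‖g2 - g2p‖ ^ 2 - 2 * mu2 * ⟪g2 - g2p, x - xp⟫ + mu2 ^ 2 * ‖x - xp‖ ^ 2))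
              + (L1 - mu1) * ((mu2 * (L1 + mu1)) ^ 2 * ‖g2 - g2p‖ ^ 2 - 2 * (mu2 * (L1 + mu1) * (L2 * (mu1 * L1 + mu2 * L1 + mu1 * mu2) - mu1 * mu2 * L1)) * ⟪g2 - g2p, x - xp⟫ + (L2 * (mu1 * L1 + mu2 * L1 + mu1 * mu2) - mu1 * mu2 * L1) ^ 2 * ‖x - xp‖ ^ 2) := by
          linear_combination (-(((1:ℝ) / 2) * ‖g1 - g2‖ ^ 2)) * e_q
            + (-(((1:ℝ) / 2) * ‖g2 - g2p‖ ^ 2)) * e_r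
        rw [hiden]
        have hcm1 : (0:ℝ) ≤ 2 * (L2 - mu2) * (L2 * (mu1 * L1 + mu2 * L1 + mu1 * mu2) - mu1 * mu2 * L1) * L1 :=
          mul_nonneg (mul_nonneg (mul_nonneg (by norm_num) (le_of_lt hd2')) (le_of_lt hM))
            (le_of_lt hL1pos)
        have hcm2 : (0:ℝ) ≤ 2 * (L2 - mu2) * (L2 * (mu1 * L1 + mu2 * L1 + mu1 * mu2) - mu1 * mu2 * L1) * (-mu1) :=
          mul_nonneg (mul_nonneg (mul_nonneg (by norm_num) (le_of_lt hd2')) (le_of_lt hM))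
            (by linarith)
        have hcm3 : (0:ℝ) ≤ 2 * (L1 - mu1) * (L2 * (mu1 * L1 + mu2 * L1 + mu1 * mu2) - mu1 * mu2 * L1) * (L1 + mu1) :=
          mul_nonneg (mul_nonneg (mul_nonneg (by norm_num) (le_of_lt hd1)) (le_of_lt hM))
            (le_of_lt hL1mu1)
        exact add_nonneg (add_nonneg (add_nonneg (mul_nonneg hcm1 hG1) (mul_nonneg hcm2 hG2))
          (mul_nonneg hcm3 hG4)) (mul_nonneg (le_of_lt hd1) hHH)
      have hXX : (2 * (L1 - mu1) * (L2 - mu2) * (L2 * (mu1 * L1 + mu2 * L1 + mu1 * mu2) - mu1 * mu2 * L1) * (L1 + mu1)) * 0 ≤ (2 * (L1 - mu1) * (L2 - mu2) * (L2 * (mu1 * L1 + mu2 * L1 + mu1 * mu2) - mu1 * mu2 * L1) * (L1 + mu1)) * (f1 x - f2 x - (f1 xp - f2 xp) - (1 / (L1 + mu1) * ((1:ℝ) / 2) * ‖g1 - g2‖ ^ 2 + (mu1 * L1 + mu2 * L1 + mu1 * mu2) / (L2 * (mu1 * L1 + mu2 * L1 + mu1 * mu2) - mu1 * mu2 * L1)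 * ((1:ℝ) / 2) * ‖g2 - g2p‖ ^ 2)) := by
        rw [mul_zero]
        exact hX
      have hfin := le_of_mul_le_mul_left hXX hCpos
      rw [ge_iff_le, ← sub_nonneg]
      linarith [hfin]
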